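/- Let k be a field and H a finite-dimensional bialgebra over k, with comultiplication in Sweedler notation Δ(h) = Σ h_{(1)} ⊗ h_{(2)}, counit ε, and dual space H*. Define σ_bi : H ⊗ H* → H* ⊗ H, h ⊗ l ↦ Σ (x ↦ l(x·h_{(2)})) ⊗ h_{(1)}. If σ_bi is bijective, then H admits an antipode, i.e. there exists a linear map S : H → H such that Σ S(h_{(1)})h_{(2)} = ε(h)1 = Σ h_{(1)}S(h_{(2)}) for all h ∈ H (so H is a Hopf algebra). -/

import Mathlib

open TensorProduct

variable (k : Type*) [Field k] (H : Type*) [Ring H] [Bialgebra k H]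

/-- The bilinear contraction `H ⊗ H* → H*`, `h ⊗ l ↦ (x ↦ l (x * h))`. -/
noncomputable def rightMulDual : H ⊗[k] Module.Dual k H →ₗ[k] Module.Dual k H :=
  TensorProduct.lift
    ((LinearMap.llcomp k H H k).flip ∘ₗ (LinearMap.mul k H).flip)

/-- The braiding `σ_bi : H ⊗ H* → H* ⊗ H`,
`h ⊗ l ↦ Σ (x ↦ l (x · h₍₂₎)) ⊗ h₍₁₎` (Sweedler notation). -/
noncomputable def sigmaBi : H ⊗[k] Module.Dual k H →ₗ[k] Module.Dual k H ⊗[k] H :=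
  (TensorProduct.comm k H (Module.Dual k H)).toLinearMap
    ∘ₗ (LinearMap.lTensor H (rightMulDual k H))
    ∘ₗ (TensorProduct.assoc k H H (Module.Dual k H)).toLinearMap
    ∘ₗ ((Coalgebra.comul (R := k) (A := H)).rTensor (Module.Dual k H))


@[simp] lemma rightMulDual_tmul (h : H) (l : Module.Dual k H) (x : H) :
    rightMulDual k H (h ⊗ₜ l) x = l (x * h) := by
  simp [rightMulDual]


noncomputable def Nmap (φ : H →ₗ[k] H) :
    H ⊗[k] Module.Dual k H →ₗ[k] H ⊗[k] Module.Dual k H :=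
  (LinearMap.lTensor H (rightMulDual k H))
    ∘ₗ (TensorProduct.assoc k H H (Module.Dual k H)).toLinearMap
    ∘ₗ (((LinearMap.lTensor H φ) ∘ₗ (Coalgebra.comul (R := k) (A := H))).rTensor
        (Module.Dual k H))

lemma Nmap_tmul (φ : H →ₗ[k] H) (h : H) (l : Module.Dual k H) (r : Coalgebra.Repr k h (H × H)) :
    Nmap k H φ (h ⊗ₜ l)
      = ∑ i ∈ r.index, r.left i ⊗ₜ rightMulDual k H (φ (r.right i) ⊗ₜ l) := by
  simp only [Nmap, LinearMap.comp_apply, LinearMap.rTensor_tmul, ← r.eq]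
  rw [map_sum]
  simp [TensorProduct.sum_tmul, map_sum]

noncomputable def conv (φ ψ : H →ₗ[k] H) : H →ₗ[k] H :=
  (LinearMap.mul' k H) ∘ₗ (TensorProduct.map φ ψ) ∘ₗ (Coalgebra.comul (R := k) (A := H))

noncomputable def convUnit : H →ₗ[k] H :=
  (Algebra.linearMap k H) ∘ₗ (Coalgebra.counit (R := k) (A := H))

lemma conv_apply (φ ψ : H →ₗ[k] H) (h : H) (r : Coalgebra.Repr k h (H × H)) :
    conv k H φ ψ h = ∑ i ∈ r.index, φ (r.left i) * ψ (r.right i) := by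
  simp only [conv, LinearMap.comp_apply, ← r.eq, map_sum]
  simp

lemma repr_smul_left (h : H) (r : Coalgebra.Repr k h (H × H)) :
    ∑ i ∈ r.index, Coalgebra.counit (R := k) (r.left i) • r.right i = h := by
  have := Coalgebra.sum_counit_tmul_eq (R := k) r
  apply_fun (TensorProduct.lid k H) at this
  rw [map_sum] at this
  simp only [TensorProduct.lid_tmul] at this
  simpa using this

lemma repr_smul_right (h : H) (r : Coalgebra.Repr k h (H × H)) :
    ∑ i ∈ r.index, Coalgebra.counit (R := k) (r.right i) • r.left i = h := by
  have := Coalgebra.sum_tmul_counit_eq (R := k) r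
  apply_fun (TensorProduct.rid k H) at this
  rw [map_sum] at this
  simp only [TensorProduct.rid_tmul] at this
  simpa using this

lemma conv_unit_left (φ : H →ₗ[k] H) : conv k H (convUnit k H) φ = φ := by
  ext h
  rw [conv_apply k H _ _ h (Coalgebra.Repr.arbitrary k h)]
  simp only [convUnit, LinearMap.comp_apply, Algebra.linearMap_apply, Algebra.algebraMap_eq_smul_one]
  simp only [smul_mul_assoc, one_mul, ← map_smul, ← map_sum]
  rw [repr_smul_left]

lemma conv_unit_right (φ : H →ₗ[k] H) : conv k H φ (convUnit k H) = φ := by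
  ext h
  rw [conv_apply k H _ _ h (Coalgebra.Repr.arbitrary k h)]
  simp only [convUnit, LinearMap.comp_apply, Algebra.linearMap_apply, Algebra.algebraMap_eq_smul_one]
  simp only [mul_smul_comm, mul_one, ← map_smul, ← map_sum]
  rw [repr_smul_right]

lemma rightMulDual_one (l : Module.Dual k H) : rightMulDual k H (1 ⊗ₜ l) = l := by
  ext x; simp

lemma Nmap_unit : Nmap k H (convUnit k H) = LinearMap.id := by
  apply TensorProduct.ext'
  intro h l
  rw [Nmap_tmul k H _ h l (Coalgebra.Repr.arbitrary k h)]
  simp only [convUnit, LinearMap.comp_apply, Algebra.linearMap_apply,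
    Algebra.algebraMap_eq_smul_one]
  simp only [← TensorProduct.smul_tmul', map_smul, rightMulDual_one k H,
    LinearMap.id_coe, id_eq, TensorProduct.tmul_smul]
  simp only [TensorProduct.smul_tmul']
  rw [← TensorProduct.sum_tmul]
  rw [repr_smul_right]

/-- The extraction functional `E (h ⊗ l) = ε(h) * l 1`. -/
noncomputable def extrMap : H ⊗[k] Module.Dual k H →ₗ[k] k :=
  (LinearMap.applyₗ (1 : H))
    ∘ₗ (TensorProduct.lid k (Module.Dual k H)).toLinearMap
    ∘ₗ ((Coalgebra.counit (R := k) (A := H)).rTensor (Module.Dual k H))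

@[simp] lemma extrMap_tmul (h : H) (l : Module.Dual k H) :
    extrMap k H (h ⊗ₜ l) = Coalgebra.counit (R := k) h * l 1 := by
  simp [extrMap, smul_eq_mul]

lemma extr_Nmap (φ : H →ₗ[k] H) (h : H) (l : Module.Dual k H) :
    extrMap k H (Nmap k H φ (h ⊗ₜ l)) = l (φ h) := by
  rw [Nmap_tmul k H _ h l (Coalgebra.Repr.arbitrary k h)]
  rw [map_sum]
  simp only [extrMap_tmul, rightMulDual_tmul, one_mul]
  have : ∀ i ∈ (Coalgebra.Repr.arbitrary k h).index,
      Coalgebra.counit (R := k) ((Coalgebra.Repr.arbitrary k h).left i) *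
        l (φ ((Coalgebra.Repr.arbitrary k h).right i))
      = l (φ (Coalgebra.counit (R := k) ((Coalgebra.Repr.arbitrary k h).left i) •
          (Coalgebra.Repr.arbitrary k h).right i)) := by
    intro i _; rw [map_smul, map_smul]; simp
  rw [Finset.sum_congr rfl this, ← map_sum, ← map_sum, repr_smul_left]

lemma Nmap_injective : Function.Injective (Nmap k H) := by
  intro φ ψ hfg
  ext h
  rw [← sub_eq_zero, ← Module.forall_dual_apply_eq_zero_iff k]
  intro l
  have := congrArg (fun F => extrMap k H (F (h ⊗ₜ l))) hfg
  simp only [extr_Nmap] at this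
  simp [map_sub, this, sub_eq_zero]

lemma rightMulDual_comp (c d : H) (l : Module.Dual k H) :
    rightMulDual k H (c ⊗ₜ rightMulDual k H (d ⊗ₜ l))
      = rightMulDual k H ((c * d) ⊗ₜ l) := by
  ext x; simp [mul_assoc]

lemma conv_assoc (φ ψ χ : H →ₗ[k] H) :
    conv k H (conv k H φ ψ) χ = conv k H φ (conv k H ψ χ) := by
  ext h
  set r := Coalgebra.Repr.arbitrary k h with hr
  set a₁ : (i : H × H) → Coalgebra.Repr k (r.left i) (H × H) :=
    fun i => Coalgebra.Repr.arbitrary k (r.left i) with ha₁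
  set a₂ : (i : H × H) → Coalgebra.Repr k (r.right i) (H × H) :=
    fun i => Coalgebra.Repr.arbitrary k (r.right i) with ha₂
  have key := Coalgebra.sum_tmul_tmul_eq (R := k) r a₁ a₂
  apply_fun (LinearMap.mul' k H ∘ₗ (LinearMap.lTensor H (LinearMap.mul' k H))
      ∘ₗ (TensorProduct.map φ (TensorProduct.map ψ χ))) at key
  simp only [map_sum, LinearMap.comp_apply, TensorProduct.map_tmul,
    LinearMap.lTensor_tmul, LinearMap.mul'_apply] at key
  have lhs : conv k H (conv k H φ ψ) χ h
      = ∑ i ∈ r.index, ∑ j ∈ (a₁ i).index,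
          φ ((a₁ i).left j) * ψ ((a₁ i).right j) * χ (r.right i) := by
    rw [conv_apply k H _ _ h r]
    refine Finset.sum_congr rfl fun i _ => ?_
    rw [conv_apply k H _ _ _ (a₁ i), Finset.sum_mul]
  have rhs : conv k H φ (conv k H ψ χ) h
      = ∑ i ∈ r.index, ∑ j ∈ (a₂ i).index,
          φ (r.left i) * (ψ ((a₂ i).left j) * χ ((a₂ i).right j)) := by
    rw [conv_apply k H _ _ h r]
    refine Finset.sum_congr rfl fun i _ => ?_
    rw [conv_apply k H _ _ _ (a₂ i), Finset.mul_sum]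
  rw [lhs, rhs, ← key]
  simp [mul_assoc]

lemma Nmap_mul (φ ψ : H →ₗ[k] H) :
    Nmap k H (conv k H φ ψ) = Nmap k H φ ∘ₗ Nmap k H ψ := by
  apply TensorProduct.ext'
  intro h l
  set r := Coalgebra.Repr.arbitrary k h with hr
  set a₁ : (i : H × H) → Coalgebra.Repr k (r.left i) (H × H) :=
    fun i => Coalgebra.Repr.arbitrary k (r.left i) with ha₁
  set a₂ : (i : H × H) → Coalgebra.Repr k (r.right i) (H × H) :=
    fun i => Coalgebra.Repr.arbitrary k (r.right i) with ha₂
  have key := Coalgebra.sum_tmul_tmul_eq (R := k) r a₁ a₂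
  apply_fun (TensorProduct.map (LinearMap.id (R := k) (M := H))
      ((rightMulDual k H)
        ∘ₗ ((TensorProduct.mk k H (Module.Dual k H)).flip l)
        ∘ₗ (LinearMap.mul' k H)
        ∘ₗ (TensorProduct.map φ ψ))) at key
  simp only [map_sum, TensorProduct.map_tmul, LinearMap.comp_apply,
    LinearMap.mul'_apply, LinearMap.id_coe, id_eq, LinearMap.flip_apply,
    TensorProduct.mk_apply] at key
  have lhs : Nmap k H (conv k H φ ψ) (h ⊗ₜ l)
      = ∑ i ∈ r.index, ∑ j ∈ (a₂ i).index,
          r.left i ⊗ₜ rightMulDual k H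
            ((φ ((a₂ i).left j) * ψ ((a₂ i).right j)) ⊗ₜ l) := by
    rw [Nmap_tmul k H _ h l r]
    refine Finset.sum_congr rfl fun i _ => ?_
    rw [conv_apply k H _ _ _ (a₂ i)]
    rw [TensorProduct.sum_tmul, map_sum, TensorProduct.tmul_sum]
  have rhs : (Nmap k H φ ∘ₗ Nmap k H ψ) (h ⊗ₜ l)
      = ∑ i ∈ r.index, ∑ j ∈ (a₁ i).index,
          (a₁ i).left j ⊗ₜ rightMulDual k H
            ((φ ((a₁ i).right j) * ψ (r.right i)) ⊗ₜ l) := by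
    rw [LinearMap.comp_apply, Nmap_tmul k H _ h l r, map_sum]
    refine Finset.sum_congr rfl fun i _ => ?_
    rw [Nmap_tmul k H φ (r.left i) _ (a₁ i)]
    refine Finset.sum_congr rfl fun j _ => ?_
    rw [rightMulDual_comp]
  rw [lhs, rhs, key]

/-- Left convolution by the identity, as a linear endomap of `End(H)`. -/
noncomputable def convL : (H →ₗ[k] H) →ₗ[k] (H →ₗ[k] H) where
  toFun φ := conv k H LinearMap.id φ
  map_add' φ φ' := by
    simp only [conv, TensorProduct.map_add_right, LinearMap.add_comp, LinearMap.comp_add]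
  map_smul' c φ := by
    simp only [conv, TensorProduct.map_smul_right, LinearMap.smul_comp, LinearMap.comp_smul,
      RingHom.id_apply]

/-- Right convolution by the identity, as a linear endomap of `End(H)`. -/
noncomputable def convR : (H →ₗ[k] H) →ₗ[k] (H →ₗ[k] H) where
  toFun φ := conv k H φ LinearMap.id
  map_add' φ φ' := by
    simp only [conv, TensorProduct.map_add_left, LinearMap.add_comp, LinearMap.comp_add]
  map_smul' c φ := by
    simp only [conv, TensorProduct.map_smul_left, LinearMap.smul_comp, LinearMap.comp_smul,
      RingHom.id_apply]

lemma sigmaBi_eq_comm_Nmap :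
    sigmaBi k H = (TensorProduct.comm k H (Module.Dual k H)).toLinearMap
      ∘ₗ Nmap k H LinearMap.id := by
  unfold sigmaBi Nmap
  rw [LinearMap.lTensor_id, LinearMap.id_comp]


/-- If `H` is a finite-dimensional bialgebra and `σ_bi` is bijective, then `H` admits an
antipode: there is a linear map `S : H → H` with
`Σ S(h₍₁₎) h₍₂₎ = ε(h) 1 = Σ h₍₁₎ S(h₍₂₎)` for all `h`. -/
theorem antipode_of_sigmaBi_bijective [FiniteDimensional k H]
    (hbij : Function.Bijective (sigmaBi k H)) :
    ∃ S : H →ₗ[k] H,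
      (LinearMap.mul' k H) ∘ₗ (S.rTensor H) ∘ₗ (Coalgebra.comul (R := k) (A := H))
          = (Algebra.linearMap k H) ∘ₗ (Coalgebra.counit (R := k) (A := H))
        ∧ (LinearMap.mul' k H) ∘ₗ (S.lTensor H) ∘ₗ (Coalgebra.comul (R := k) (A := H))
          = (Algebra.linearMap k H) ∘ₗ (Coalgebra.counit (R := k) (A := H)) := by
  have hNid : Function.Bijective (Nmap k H LinearMap.id) := by
    have : Nmap k H LinearMap.id
        = (TensorProduct.comm k H (Module.Dual k H)).symm.toLinearMap ∘ₗ sigmaBi k H := by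
      rw [sigmaBi_eq_comm_Nmap]
      ext x
      simp
    rw [this]
    exact (TensorProduct.comm k H (Module.Dual k H)).symm.bijective.comp hbij
  -- injectivity, hence surjectivity, of left/right convolution with `id`
  have hCLinj : Function.Injective (convL k H) := by
    intro φ ψ hc
    apply Nmap_injective k H
    have h2 : Nmap k H (conv k H LinearMap.id φ) = Nmap k H (conv k H LinearMap.id ψ) :=
      congrArg _ hc
    rw [Nmap_mul, Nmap_mul] at h2
    exact LinearMap.ext fun t => hNid.injective (LinearMap.congr_fun h2 t)
  have hCRinj : Function.Injective (convR k H) := by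
    intro φ ψ hc
    apply Nmap_injective k H
    have h2 : Nmap k H (conv k H φ LinearMap.id) = Nmap k H (conv k H ψ LinearMap.id) :=
      congrArg _ hc
    rw [Nmap_mul, Nmap_mul] at h2
    refine LinearMap.ext fun t => ?_
    obtain ⟨y, rfl⟩ := hNid.surjective t
    exact LinearMap.congr_fun h2 y
  obtain ⟨S₁, hS₁⟩ := (LinearMap.injective_iff_surjective).mp hCLinj (convUnit k H)
  obtain ⟨S₂, hS₂⟩ := (LinearMap.injective_iff_surjective).mp hCRinj (convUnit k H)
  -- hS₁ : conv id S₁ = u,  hS₂ : conv S₂ id = u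
  change conv k H LinearMap.id S₁ = convUnit k H at hS₁
  change conv k H S₂ LinearMap.id = convUnit k H at hS₂
  have hS : S₂ = S₁ := by
    calc S₂ = conv k H S₂ (convUnit k H) := (conv_unit_right k H S₂).symm
    _ = conv k H S₂ (conv k H LinearMap.id S₁) := by rw [hS₁]
    _ = conv k H (conv k H S₂ LinearMap.id) S₁ := (conv_assoc k H _ _ _).symm
    _ = conv k H (convUnit k H) S₁ := by rw [hS₂]
    _ = S₁ := conv_unit_left k H S₁
  refine ⟨S₁, ?_, ?_⟩
  · rw [← hS] at hS₁ ⊢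
    exact hS₂
  · exact hS₁
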